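/- Let K be a positive semidefinite bounded linear operator on H and let (F,G) be an (N,n) K-dual pair. Then max_{1≤i≤N} ‖f_i‖·‖g_i‖ ≥ tr(K)/N. -/

import Mathlib

open scoped ComplexOrder

local notation "⟪" x ", " y "⟫" => @inner ℂ _ _ x y

/-- For a positive semidefinite bounded operator `K` on a finite-dimensional
complex inner product space `H` and an `(N, n)` `K`-dual pair `(F, G)`
(the paper's inner product `⟨f, g⟩` is linear in the first slot, i.e. it is Mathlib's `⟪g, f⟫`),
`max_{1 ≤ i ≤ N} ‖f_i‖ · ‖g_i‖ ≥ tr(K) / N`. -/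
theorem stmt0
    {H : Type*} [NormedAddCommGroup H] [InnerProductSpace ℂ H] [FiniteDimensional ℂ H]
    (hdim : 1 ≤ Module.finrank ℂ H)
    {N : ℕ} (hN : 1 ≤ N)
    (K : H →L[ℂ] H) (hK : ∀ f : H, 0 ≤ ⟪K f, f⟫)
    (F G : Fin N → H)
    (hdual : ∀ f : H, K f = ∑ i, ⟪G i, f⟫ • F i) :
    (LinearMap.trace ℂ H (K : H →ₗ[ℂ] H)).re / N ≤ ⨆ i, ‖F i‖ * ‖G i‖ := by
  set b := stdOrthonormalBasis ℂ H
  have htr : LinearMap.trace ℂ H (K : H →ₗ[ℂ] H) = ∑ i, ⟪G i, F i⟫ := by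
    rw [LinearMap.trace_eq_matrix_trace ℂ b.toBasis, Matrix.trace]
    have h1 : ∀ j, (LinearMap.toMatrix b.toBasis b.toBasis (K : H →ₗ[ℂ] H)).diag j
        = ∑ i, ⟪G i, b j⟫ * ⟪b j, F i⟫ := by
      intro j
      simp only [Matrix.diag, LinearMap.toMatrix_apply, ContinuousLinearMap.coe_coe,
        OrthonormalBasis.coe_toBasis, OrthonormalBasis.coe_toBasis_repr_apply]
      rw [hdual (b j), map_sum]
      rw [WithLp.ofLp_sum, Finset.sum_apply]
      exact Finset.sum_congr rfl fun i _ => by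
        rw [map_smul, WithLp.ofLp_smul, Pi.smul_apply, b.repr_apply_apply, smul_eq_mul]
    rw [Finset.sum_congr rfl (fun j _ => h1 j), Finset.sum_comm]
    exact Finset.sum_congr rfl fun i _ => b.sum_inner_mul_inner (G i) (F i)
  have hbdd : BddAbove (Set.range fun i => ‖F i‖ * ‖G i‖) := Set.Finite.bddAbove (Set.finite_range _)
  have key : ∀ i, (⟪G i, F i⟫).re ≤ ⨆ i, ‖F i‖ * ‖G i‖ := fun i =>
    le_trans (le_trans (Complex.re_le_norm _) (by
      simpa [mul_comm] using norm_inner_le_norm (𝕜 := ℂ) (G i) (F i)))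
      (le_ciSup hbdd i)
  have : (LinearMap.trace ℂ H (K : H →ₗ[ℂ] H)).re ≤ N * ⨆ i, ‖F i‖ * ‖G i‖ := by
    rw [htr, Complex.re_sum]
    calc ∑ i, (⟪G i, F i⟫).re ≤ ∑ _i : Fin N, ⨆ i, ‖F i‖ * ‖G i‖ :=
          Finset.sum_le_sum fun i _ => key i
      _ = N * ⨆ i, ‖F i‖ * ‖G i‖ := by simp [Finset.sum_const, nsmul_eq_mul]
  have hNpos : (0:ℝ) < N := by positivity
  rw [div_le_iff₀ hNpos]
  linarith [this]
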